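/- If U is an ultrafilter on βℕ that is uniformly recurrent for the shift S(V) = 1 + V and proximal to the principal ultrafilter at 0, then U is idempotent: U + U = U. -/
import Mathlib


open Filter

/-- The sum of two ultrafilters on ℕ:
`X ∈ uadd U V ↔ {m | {n | m + n ∈ X} ∈ V} ∈ U`. -/
def uadd (U V : Ultrafilter ℕ) : Ultrafilter ℕ :=
  Ultrafilter.bind U (fun m => Ultrafilter.map (fun n => m + n) V)

/-- The shift map on βℕ, `S(V) = 1 + V`. -/
def shift (V : Ultrafilter ℕ) : Ultrafilter ℕ := uadd (pure 1) V

attribute [local instance] Ultrafilter.add Ultrafilter.addSemigroup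

lemma uadd_eq (U V : Ultrafilter ℕ) : uadd U V = U + V := by
  refine Ultrafilter.coe_inj.mp (Filter.ext fun s => ?_)
  rw [show ((U + V : Ultrafilter ℕ) : Filter ℕ) = _ from rfl]
  simp [uadd, Ultrafilter.eventually_add, mem_map]
  rfl

lemma upure_add_pure (a b : ℕ) : (pure a : Ultrafilter ℕ) + pure b = pure (a + b) := by
  refine Ultrafilter.coe_inj.mp (Filter.ext fun s => ?_)
  simp [Ultrafilter.eventually_add]; rfl

lemma pure_zero_add (U : Ultrafilter ℕ) : (pure 0 : Ultrafilter ℕ) + U = U := by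
  refine Ultrafilter.coe_inj.mp (Filter.ext' fun p => ?_)
  rw [Ultrafilter.eventually_add]
  simp

lemma pure_add_comm (a : ℕ) (U : Ultrafilter ℕ) :
    (pure a : Ultrafilter ℕ) + U = U + pure a := by
  refine Ultrafilter.coe_inj.mp (Filter.ext' fun p => ?_)
  rw [Ultrafilter.eventually_add, Ultrafilter.eventually_add]
  simp [Nat.add_comm]

lemma shift_iterate (n : ℕ) (U : Ultrafilter ℕ) :
    shift^[n] U = (pure n : Ultrafilter ℕ) + U := by
  induction n with
  | zero => simp [pure_zero_add]
  | succ n ih =>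
      rw [Function.iterate_succ_apply', ih, shift, uadd_eq, ← add_assoc, upure_add_pure]
      norm_num [Nat.add_comm]

lemma mem_closure_pure_image {A : Set ℕ} {W : Ultrafilter ℕ} (hA : A ∈ W) :
    W ∈ closure ((pure : ℕ → Ultrafilter ℕ) '' A) := by
  rw [mem_closure_iff]
  intro o ho hWo
  obtain ⟨t, ⟨s, rfl⟩, hWt, hto⟩ := ultrafilterBasis_is_basis.exists_subset_of_mem_open hWo ho
  obtain ⟨n, hns, hnA⟩ := Ultrafilter.nonempty_of_mem (W.inter_mem hWt hA)
  exact ⟨pure n, hto hns, ⟨n, hnA, rfl⟩⟩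

lemma add_mem_of_mem {A : Set ℕ} {V q : Ultrafilter ℕ} {C : Set (Ultrafilter ℕ)}
    (hC : IsClosed C) (hA : A ∈ V) (h : ∀ n ∈ A, (pure n : Ultrafilter ℕ) + q ∈ C) :
    V + q ∈ C := by
  have h1 : V + q ∈ (· + q) '' closure ((pure : ℕ → Ultrafilter ℕ) '' A) :=
    ⟨V, mem_closure_pure_image hA, rfl⟩
  have h2 := image_closure_subset_closure_image (f := (· + q))
    (s := (pure : ℕ → Ultrafilter ℕ) '' A) (Ultrafilter.continuous_add_left q)
  have h3 : closure ((· + q) '' ((pure : ℕ → Ultrafilter ℕ) '' A)) ⊆ C := by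
    refine closure_minimal ?_ hC
    rintro _ ⟨_, ⟨n, hn, rfl⟩, rfl⟩
    exact h n hn
  exact h3 (h2 h1)

/-- If `U` is uniformly recurrent for the shift and proximal to the principal
ultrafilter at 0, then `U` is idempotent. -/
theorem idempotent_of_uniformlyRecurrent_proximal (U : Ultrafilter ℕ)
    (hur : ∀ G ∈ nhds U, ∃ M : ℕ, ∀ n : ℕ, ∃ k < M, shift^[n + k] U ∈ G)
    (hprox : ∀ G ∈ nhdsSet (Set.diagonal (Ultrafilter ℕ)),
      {n : ℕ | (shift^[n] U, shift^[n] (pure 0 : Ultrafilter ℕ)) ∈ G}.Infinite) :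
    uadd U U = U := by
  rw [uadd_eq]
  -- Step A: proximality gives V with V + U = V
  obtain ⟨V, hV⟩ : ∃ V : Ultrafilter ℕ, V + U = V := by
    by_contra h
    push_neg at h
    set K : Set (Ultrafilter ℕ × Ultrafilter ℕ) := Set.range fun W => (W + U, W) with hK
    have hKc : IsCompact K := isCompact_range
      ((Ultrafilter.continuous_add_left U).prodMk continuous_id)
    have hKd : Disjoint K (Set.diagonal (Ultrafilter ℕ)) := by
      rw [Set.disjoint_left]
      rintro _ ⟨W, rfl⟩ hd
      exact h W hd
    have hmem : Kᶜ ∈ nhdsSet (Set.diagonal (Ultrafilter ℕ)) :=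
      hKc.isClosed.isOpen_compl.mem_nhdsSet.mpr (Set.disjoint_right.mp hKd)
    obtain ⟨n, hn⟩ := ((hprox _ hmem).nonempty)
    apply hn
    rw [shift_iterate, shift_iterate, upure_add_pure, Nat.add_zero]
    exact ⟨pure n, rfl⟩
  -- Step B: uniform recurrence gives W with W + V = U
  obtain ⟨W, hW⟩ : ∃ W : Ultrafilter ℕ, W + V = U := by
    -- U is in the closure of the orbit of V, which is contained in range (· + V)
    have horb : U ∈ closure (Set.range fun k : ℕ => (pure k : Ultrafilter ℕ) + V) := by
      rw [mem_closure_iff]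
      intro o ho hUo
      obtain ⟨t, ⟨s, rfl⟩, hUt, hto⟩ := ultrafilterBasis_is_basis.exists_subset_of_mem_open hUo ho
      obtain ⟨M, hM⟩ := hur {u | s ∈ u} ((ultrafilter_isOpen_basic s).mem_nhds hUt)
      -- A_k = {n | shift^[n+k] U ∈ G}; some A_k ∈ V
      have hcover : (⋃ k ∈ Finset.range M, {n : ℕ | shift^[n + k] U ∈ {u : Ultrafilter ℕ | s ∈ u}}) ∈ V := by
        refine V.toFilter.mem_of_superset Filter.univ_mem fun n _ => ?_
        obtain ⟨k, hk, hks⟩ := hM n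
        exact Set.mem_biUnion (Finset.mem_range.mpr hk) hks
      obtain ⟨k, -, hAk⟩ := (Ultrafilter.finite_biUnion_mem_iff (Finset.finite_toSet _)).mp hcover
      refine ⟨(pure k : Ultrafilter ℕ) + V, hto ?_, ⟨k, rfl⟩⟩
      -- show s ∈ pure k + V, i.e. pure k + V ∈ {u | s ∈ u}, a closed set
      have : (pure k : Ultrafilter ℕ) + V ∈ {u : Ultrafilter ℕ | s ∈ u} := by
        rw [← hV, ← add_assoc, pure_add_comm, add_assoc]
        refine add_mem_of_mem (ultrafilter_isClosed_basic s) hAk fun n hn => ?_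
        rw [← add_assoc, upure_add_pure]
        have h' := hn
        rw [Set.mem_setOf_eq, shift_iterate] at h'
        exact h'
      exact this
    have hcl : closure (Set.range fun k : ℕ => (pure k : Ultrafilter ℕ) + V)
        ⊆ Set.range (· + V) := by
      refine closure_minimal ?_ ((isCompact_range (Ultrafilter.continuous_add_left V)).isClosed)
      rintro _ ⟨k, rfl⟩
      exact ⟨pure k, rfl⟩
    exact (hcl horb).imp fun W h => h
  calc U + U = W + V + U := by rw [hW]
    _ = W + (V + U) := add_assoc _ _ _
    _ = W + V := by rw [hV]
    _ = U := hW
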